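/- Let l1 and l2 be two grid lines of the triangular grid having no grid point in common, and let P be a path on the triangular grid that contains at least one edge lying on l1 and at least one edge lying on l2. Then P has at least two bends. -/

import Mathlib

/-- The triangular grid: the simple graph on `ℤ × ℤ` where two points are adjacent
iff their difference is `±(1,0)`, `±(0,1)` or `±(1,1)`. -/
def TGrid : SimpleGraph (ℤ × ℤ) where
  Adj u v :=
    (v.1 - u.1 = 1 ∧ v.2 - u.2 = 0) ∨ (v.1 - u.1 = -1 ∧ v.2 - u.2 = 0) ∨
    (v.1 - u.1 = 0 ∧ v.2 - u.2 = 1) ∨ (v.1 - u.1 = 0 ∧ v.2 - u.2 = -1) ∨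
    (v.1 - u.1 = 1 ∧ v.2 - u.2 = 1) ∨ (v.1 - u.1 = -1 ∧ v.2 - u.2 = -1)
  symm := by constructor; intro u v h; omega
  loopless := by constructor; intro u h; omega

/-- The (symmetric) direction datum of a grid edge: the pair of absolute coordinate
differences.  For grid edges this is `(1,0)` (horizontal), `(0,1)` (vertical) or
`(1,1)` (diagonal). -/
def edir (e : Sym2 (ℤ × ℤ)) : ℤ × ℤ :=
  Sym2.lift ⟨fun u v => (|u.1 - v.1|, |u.2 - v.2|), by
    intro u v; simp [abs_sub_comm]⟩ e

/-- The `t`-th edge of a walk. -/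
def wEdge {u v : ℤ × ℤ} (p : TGrid.Walk u v) (t : ℕ) : Sym2 (ℤ × ℤ) :=
  s(p.getVert t, p.getVert (t + 1))

/-- The number of bends of a walk: the number of consecutive pairs of edges with
different directions. -/
def bendCount {u v : ℤ × ℤ} (p : TGrid.Walk u v) : ℕ :=
  (List.range (p.length - 1)).countP
    (fun i => decide (edir (wEdge p i) ≠ edir (wEdge p (i + 1))))

/-- `b` is a bend point of the walk `p`. -/
def IsBendAt {u v : ℤ × ℤ} (p : TGrid.Walk u v) (b : ℤ × ℤ) : Prop :=
  ∃ i : ℕ, i + 2 ≤ p.length ∧ p.getVert (i + 1) = b ∧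
    edir (wEdge p i) ≠ edir (wEdge p (i + 1))

/-- A (nontrivial simple) path on the triangular grid. -/
structure TPath where
  src : ℤ × ℤ
  dst : ℤ × ℤ
  walk : TGrid.Walk src dst
  isPath : walk.IsPath
  nontriv : 0 < walk.length

/-- The set of grid edges of a path. -/
def pEdges (P : TPath) : Set (Sym2 (ℤ × ℤ)) := {e | e ∈ P.walk.edges}

/-- The set of grid points of a path. -/
def pPts (P : TPath) : Set (ℤ × ℤ) := {q | q ∈ P.walk.support}

/-- A segment of a path: a maximal straight (bend-free) subpath, recorded by the
interval of edge indices `[i, j)` it occupies. -/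
structure Segment (P : TPath) where
  i : ℕ
  j : ℕ
  lt : i < j
  le : j ≤ P.walk.length
  straight : ∀ t, i ≤ t → t < j → edir (wEdge P.walk t) = edir (wEdge P.walk i)
  maxLeft : i = 0 ∨ edir (wEdge P.walk (i - 1)) ≠ edir (wEdge P.walk i)
  maxRight : j = P.walk.length ∨ edir (wEdge P.walk (j - 1)) ≠ edir (wEdge P.walk j)

/-- The set of grid edges of a segment. -/
def Segment.edges {P : TPath} (s : Segment P) : Set (Sym2 (ℤ × ℤ)) :=
  {e | ∃ t, s.i ≤ t ∧ t < s.j ∧ e = wEdge P.walk t}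

/-- The set of grid points of a segment. -/
def Segment.pts {P : TPath} (s : Segment P) : Set (ℤ × ℤ) :=
  {q | ∃ t, s.i ≤ t ∧ t ≤ s.j ∧ q = P.walk.getVert t}

/-- The direction of a segment. -/
def Segment.dir {P : TPath} (s : Segment P) : ℤ × ℤ := edir (wEdge P.walk s.i)

/-- The three directions of the triangular grid. -/
inductive Dir | H | V | D
deriving DecidableEq

/-- The direction of the (straight) line from `a` to `b`. -/
def dirOf (a b : ℤ × ℤ) : Dir :=
  if a.2 = b.2 then .H else if a.1 = b.1 then .V else .D

/-- A grid line of the triangular grid: a full horizontal, vertical or diagonal line. -/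
structure GridLine where
  dir : Dir
  c : ℤ

/-- The parametrization of the points of a grid line. -/
def GridLine.pt (l : GridLine) (t : ℤ) : ℤ × ℤ :=
  match l.dir with
  | .H => (t, l.c)
  | .V => (l.c, t)
  | .D => (l.c + t, t)

/-- The `t`-th edge of a grid line. -/
def GridLine.edge (l : GridLine) (t : ℤ) : Sym2 (ℤ × ℤ) := s(l.pt t, l.pt (t + 1))

/-- The set of grid points of a grid line. -/
def GridLine.pts (l : GridLine) : Set (ℤ × ℤ) := Set.range l.pt

/-- The set of grid edges of a grid line. -/
def GridLine.edges (l : GridLine) : Set (Sym2 (ℤ × ℤ)) := Set.range l.edge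

/-- A right triangle of the triangular grid, given by a base corner `p`, a leg
length `k ≥ 1`, and one of the two possible orientations. -/
structure RightTri where
  p : ℤ × ℤ
  k : ℤ
  hk : 1 ≤ k
  orientA : Bool

/-- The set of grid edges of a right triangle. -/
def RightTri.edges (T : RightTri) : Set (Sym2 (ℤ × ℤ)) :=
  if T.orientA then
    {e | ∃ t : ℤ, 0 ≤ t ∧ t < T.k ∧
      (e = s((T.p.1 + t, T.p.2), (T.p.1 + t + 1, T.p.2)) ∨
       e = s((T.p.1 + T.k, T.p.2 + t), (T.p.1 + T.k, T.p.2 + t + 1)) ∨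
       e = s((T.p.1 + t, T.p.2 + t), (T.p.1 + t + 1, T.p.2 + t + 1)))}
  else
    {e | ∃ t : ℤ, 0 ≤ t ∧ t < T.k ∧
      (e = s((T.p.1, T.p.2 + t), (T.p.1, T.p.2 + t + 1)) ∨
       e = s((T.p.1 + t, T.p.2 + T.k), (T.p.1 + t + 1, T.p.2 + T.k)) ∨
       e = s((T.p.1 + t, T.p.2 + t), (T.p.1 + t + 1, T.p.2 + t + 1)))}

/-- The three corners of a right triangle. -/
def RightTri.corners (T : RightTri) : Set (ℤ × ℤ) :=
  if T.orientA then {T.p, (T.p.1 + T.k, T.p.2), (T.p.1 + T.k, T.p.2 + T.k)}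
  else {T.p, (T.p.1, T.p.2 + T.k), (T.p.1 + T.k, T.p.2 + T.k)}

/-- `U(𝒫)`: the subgraph of the grid formed by all segments of members of the family
that share at least one grid edge with another member, given by its set of edges. -/
def UEdges {ι : Type} (P : ι → TPath) : Set (Sym2 (ℤ × ℤ)) :=
  {e | ∃ i : ι, ∃ s : Segment (P i), e ∈ s.edges ∧
        ∃ j : ι, j ≠ i ∧ (s.edges ∩ pEdges (P j)).Nonempty}

/-- A B₁-EPGₜ representation of a simple graph `G`: a family of at most-one-bend
paths on the triangular grid whose edge-intersection graph is `G`. -/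
def IsB1EPGtRep {V : Type} (G : SimpleGraph V) (Rep : V → TPath) : Prop :=
  (∀ v, bendCount (Rep v).walk ≤ 1) ∧
  ∀ u v : V, u ≠ v → (G.Adj u v ↔ (pEdges (Rep u) ∩ pEdges (Rep v)).Nonempty)

-- aux
def ldir : Dir → ℤ × ℤ
  | .H => (1,0) | .V => (0,1) | .D => (1,1)

def lineEq (l : GridLine) (q : ℤ × ℤ) : Prop :=
  match l.dir with
  | .H => q.2 = l.c
  | .V => q.1 = l.c
  | .D => q.1 - q.2 = l.c

lemma mem_pts_iff (l : GridLine) (q : ℤ × ℤ) : q ∈ l.pts ↔ lineEq l q := by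
  obtain ⟨d, c⟩ := l
  obtain ⟨x, y⟩ := q
  cases d <;> simp only [GridLine.pts, GridLine.pt, lineEq, Set.mem_range] <;>
    constructor <;> intro h
  · obtain ⟨t, ht⟩ := h; simp [Prod.ext_iff] at ht; omega
  · exact ⟨x, by simp [Prod.ext_iff]; omega⟩
  · obtain ⟨t, ht⟩ := h; simp [Prod.ext_iff] at ht; omega
  · exact ⟨y, by simp [Prod.ext_iff]; omega⟩
  · obtain ⟨t, ht⟩ := h; simp [Prod.ext_iff] at ht; omega
  · exact ⟨y, by simp [Prod.ext_iff]; omega⟩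

lemma edir_line_edge (l : GridLine) (t : ℤ) : edir (l.edge t) = ldir l.dir := by
  obtain ⟨d, c⟩ := l
  cases d <;>
    simp [GridLine.edge, GridLine.pt, edir, ldir, Prod.ext_iff] <;>
    rw [show ∀ a : ℤ, a - (a+1) = -1 from fun a => by ring] <;> norm_num

lemma edge_pts (l : GridLine) (t : ℤ) (x : ℤ × ℤ) (hx : x ∈ l.edge t) : lineEq l x := by
  rw [GridLine.edge, Sym2.mem_iff] at hx
  rcases hx with rfl | rfl <;> rw [← mem_pts_iff] <;> exact Set.mem_range_self _

lemma step_line (l : GridLine) (u v : ℤ × ℤ) (hadj : TGrid.Adj u v)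
    (hd : edir s(u,v) = ldir l.dir) (hu : lineEq l u) : lineEq l v := by
  have hadj' : (v.1 - u.1 = 1 ∧ v.2 - u.2 = 0) ∨ (v.1 - u.1 = -1 ∧ v.2 - u.2 = 0) ∨
    (v.1 - u.1 = 0 ∧ v.2 - u.2 = 1) ∨ (v.1 - u.1 = 0 ∧ v.2 - u.2 = -1) ∨
    (v.1 - u.1 = 1 ∧ v.2 - u.2 = 1) ∨ (v.1 - u.1 = -1 ∧ v.2 - u.2 = -1) := hadj
  obtain ⟨d, c⟩ := l
  have h1 : |u.1 - v.1| = (ldir d).1 := congrArg Prod.fst hd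
  have h2 : |u.2 - v.2| = (ldir d).2 := congrArg Prod.snd hd
  cases d <;> simp [ldir] at h1 h2 <;> simp [lineEq] at hu ⊢ <;>
    rcases abs_cases (u.1 - v.1) with ⟨e1, _⟩ | ⟨e1, _⟩ <;>
    rcases abs_cases (u.2 - v.2) with ⟨e2, _⟩ | ⟨e2, _⟩ <;> omega

lemma exists_index {u v : ℤ × ℤ} (w : TGrid.Walk u v) (e : Sym2 (ℤ × ℤ))
    (he : e ∈ w.edges) : ∃ t, t < w.length ∧ wEdge w t = e := by
  induction w with
  | nil => simp at he
  | @cons a b c h q ih =>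
    rw [SimpleGraph.Walk.edges_cons, List.mem_cons] at he
    rcases he with rfl | he
    · exact ⟨0, by simp, by simp [wEdge, SimpleGraph.Walk.getVert_cons_succ,
        SimpleGraph.Walk.getVert_zero]⟩
    · obtain ⟨t, ht, hw⟩ := ih he
      exact ⟨t+1, by simp; omega, by
        simpa [wEdge, SimpleGraph.Walk.getVert_cons_succ] using hw⟩

lemma two_le_countP (n i1 i2 : ℕ) (p : ℕ → Bool) (h12 : i1 < i2) (h2 : i2 < n)
    (p1 : p i1 = true) (p2 : p i2 = true) : 2 ≤ (List.range n).countP p := by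
  have hsub : List.Subperm [i1, i2] ((List.range n).filter p) := by
    apply List.subperm_of_subset
    · simp; omega
    · intro a ha
      simp at ha
      rcases ha with rfl | rfl <;> rw [List.mem_filter, List.mem_range] <;>
        exact ⟨by omega, by assumption⟩
  have := hsub.length_le
  rw [List.countP_eq_length_filter]
  simpa using this

lemma chain_edir {u v : ℤ × ℤ} (w : TGrid.Walk u v) (a b : ℕ)
    (h : ∀ i, a ≤ i → i < b → edir (wEdge w i) = edir (wEdge w (i+1))) :
    ∀ t, a ≤ t → t ≤ b → edir (wEdge w t) = edir (wEdge w a) := by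
  intro t ht1 ht2
  induction t, ht1 using Nat.le_induction with
  | base => rfl
  | succ n hn ih => rw [← h n hn (by omega)]; exact ih (by omega)

lemma prop_up {u v : ℤ × ℤ} (w : TGrid.Walk u v) (l : GridLine) (a b : ℕ)
    (hb : b ≤ w.length)
    (same : ∀ t, a ≤ t → t < b → edir (wEdge w t) = ldir l.dir)
    (base : lineEq l (w.getVert a)) :
    ∀ t, a ≤ t → t ≤ b → lineEq l (w.getVert t) := by
  intro t ht1 ht2
  induction t, ht1 using Nat.le_induction with
  | base => exact base
  | succ n hn ih =>
    have hadj := w.adj_getVert_succ (i := n) (by omega)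
    exact step_line l _ _ hadj (same n hn (by omega)) (ih (by omega))

lemma prop_down {u v : ℤ × ℤ} (w : TGrid.Walk u v) (l : GridLine) (a b : ℕ)
    (hb : b ≤ w.length)
    (same : ∀ t, a ≤ t → t < b → edir (wEdge w t) = ldir l.dir)
    (base : lineEq l (w.getVert b)) :
    ∀ t, a ≤ t → t ≤ b → lineEq l (w.getVert t) := by
  intro t ht1 ht2
  obtain ⟨k, hk⟩ : ∃ k, t + k = b := ⟨b - t, by omega⟩
  induction k generalizing t with
  | zero => simpa [← hk] using base
  | succ n ih =>
    have h1 : lineEq l (w.getVert (t+1)) := ih (t+1) (by omega) (by omega) (by omega)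
    have hadj := w.adj_getVert_succ (i := t) (by omega)
    have hsym : (s(w.getVert (t+1), w.getVert t) : Sym2 _) = s(w.getVert t, w.getVert (t+1)) :=
      Sym2.eq_swap
    exact step_line l _ _ hadj.symm (by rw [hsym]; exact same t ht1 (by omega)) h1


lemma key_two_bends (la lb : GridLine) (hdisj : la.pts ∩ lb.pts = ∅)
    {u v : ℤ × ℤ} (w : TGrid.Walk u v) (t1 t2 : ℕ) (h12 : t1 < t2)
    (ht2 : t2 < w.length)
    (e1 : wEdge w t1 ∈ la.edges) (e2 : wEdge w t2 ∈ lb.edges) :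
    2 ≤ bendCount w := by
  obtain ⟨s1, hs1⟩ := e1
  obtain ⟨s2, hs2⟩ := e2
  have edirA : edir (wEdge w t1) = ldir la.dir := by rw [← hs1]; exact edir_line_edge _ _
  have edirB : edir (wEdge w t2) = ldir lb.dir := by rw [← hs2]; exact edir_line_edge _ _
  have ptA : lineEq la (w.getVert t1) := by
    apply edge_pts la s1; rw [hs1]; exact Sym2.mem_mk_left _ _
  have ptB : lineEq lb (w.getVert t2) := by
    apply edge_pts lb s2; rw [hs2]; exact Sym2.mem_mk_left _ _
  have contra : ∀ x : ℤ × ℤ, lineEq la x → lineEq lb x → False := by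
    intro x hxa hxb
    have : x ∈ la.pts ∩ lb.pts := ⟨(mem_pts_iff la x).2 hxa, (mem_pts_iff lb x).2 hxb⟩
    rw [hdisj] at this; exact this
  by_contra hlt
  push_neg at hlt
  have hb1 : bendCount w ≤ 1 := by omega
  set p : ℕ → Bool := fun i => decide (edir (wEdge w i) ≠ edir (wEdge w (i + 1))) with hp
  by_cases hAll : ∀ i, t1 ≤ i → i < t2 → edir (wEdge w i) = edir (wEdge w (i+1))
  · -- straight from t1 to t2: all vertices on la, but getVert t2 also on lb
    have same : ∀ t, t1 ≤ t → t < t2 → edir (wEdge w t) = ldir la.dir := by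
      intro t h1 h2
      rw [chain_edir w t1 t2 hAll t h1 (by omega)]; exact edirA
    have := prop_up w la t1 t2 (by omega) same ptA t2 (by omega) le_rfl
    exact contra _ this ptB
  · push_neg at hAll
    obtain ⟨b, hb1', hb2', hbne⟩ := hAll
    have hpb : p b = true := by simp [hp]; exact hbne
    have huniq : ∀ i, i + 1 < w.length → i ≠ b → edir (wEdge w i) = edir (wEdge w (i+1)) := by
      intro i hi hne
      by_contra hne2
      have hpi : p i = true := by simp [hp]; exact hne2
      have h2c : 2 ≤ (List.range (w.length - 1)).countP p := by
        rcases lt_or_gt_of_ne hne with h | h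
        · exact two_le_countP _ i b p h (by omega) hpi hpb
        · exact two_le_countP _ b i p h (by omega) hpb hpi
      have hbc : bendCount w = (List.range (w.length - 1)).countP p := rfl
      omega
    -- vertices t1 .. b+1 on la
    have sameA : ∀ t, t1 ≤ t → t < b + 1 → edir (wEdge w t) = ldir la.dir := by
      intro t h1 h2
      have hch : ∀ i, t1 ≤ i → i < b → edir (wEdge w i) = edir (wEdge w (i+1)) := by
        intro i hi1 hi2; exact huniq i (by omega) (by omega)
      rw [chain_edir w t1 b hch t h1 (by omega)]; exact edirA
    have hA : lineEq la (w.getVert (b+1)) :=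
      prop_up w la t1 (b+1) (by omega) sameA ptA (b+1) (by omega) le_rfl
    -- vertices b+1 .. t2 on lb
    have sameB : ∀ t, b + 1 ≤ t → t < t2 → edir (wEdge w t) = ldir lb.dir := by
      intro t h1 h2
      have hch : ∀ i, b + 1 ≤ i → i < t2 → edir (wEdge w i) = edir (wEdge w (i+1)) := by
        intro i hi1 hi2; exact huniq i (by omega) (by omega)
      have e1' := chain_edir w (b+1) t2 hch t h1 (by omega)
      have e2' := chain_edir w (b+1) t2 hch t2 (by omega) le_rfl
      rw [e1', ← e2']; exact edirB
    have hB : lineEq lb (w.getVert (b+1)) :=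
      prop_down w lb (b+1) t2 (by omega) sameB ptB (b+1) le_rfl (by omega)
    exact contra _ hA hB

theorem stmt3' (l1 l2 : GridLine) (hdisj : l1.pts ∩ l2.pts = ∅)
    {u v : ℤ × ℤ} (w : TGrid.Walk u v)
    (h1 : ∃ e ∈ w.edges, e ∈ l1.edges)
    (h2 : ∃ e ∈ w.edges, e ∈ l2.edges) :
    2 ≤ bendCount w := by
  obtain ⟨e1, he1P, he1⟩ := h1
  obtain ⟨e2, he2P, he2⟩ := h2
  obtain ⟨t1, ht1, hw1⟩ := exists_index w e1 he1P
  obtain ⟨t2, ht2, hw2⟩ := exists_index w e2 he2P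
  have hne : t1 ≠ t2 := by
    rintro rfl
    obtain ⟨s1, hs1⟩ := he1
    have hx : w.getVert t1 ∈ l1.pts := by
      rw [mem_pts_iff]
      apply edge_pts l1 s1; rw [hs1, ← hw1]; exact Sym2.mem_mk_left _ _
    obtain ⟨s2, hs2⟩ := he2
    have hy : w.getVert t1 ∈ l2.pts := by
      rw [mem_pts_iff]
      apply edge_pts l2 s2; rw [hs2, ← hw2]; exact Sym2.mem_mk_left _ _
    have : w.getVert t1 ∈ l1.pts ∩ l2.pts := ⟨hx, hy⟩
    rw [hdisj] at this; exact this
  rcases lt_or_gt_of_ne hne with h | h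
  · exact key_two_bends l1 l2 hdisj w t1 t2 h ht2 (hw1 ▸ he1) (hw2 ▸ he2)
  · exact key_two_bends l2 l1 (by rw [Set.inter_comm]; exact hdisj) w t2 t1 h ht1
      (hw2 ▸ he2) (hw1 ▸ he1)


/-- If two grid lines have no common grid point, then any path
containing an edge of each has at least two bends. -/
theorem stmt3 (l1 l2 : GridLine) (hdisj : l1.pts ∩ l2.pts = ∅)
    (P : TPath)
    (h1 : ∃ e ∈ pEdges P, e ∈ l1.edges)
    (h2 : ∃ e ∈ pEdges P, e ∈ l2.edges) :
    2 ≤ bendCount P.walk :=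
  stmt3' l1 l2 hdisj P.walk h1 h2
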